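/- Let c₁, c̄₁, c̄₂, c̄₃ be positive constants with c₁ ≤ c̄₁. Then for all real numbers x ≥ 0, γ ≥ 0 and every real number W with c₁x² ≤ W ≤ c̄₁x², the following inequality holds: (−c̄₃x² + c̄₂xγ)/(W + 1) ≤ −c̄₃x²/(2(c̄₁x² + 1)) + c̄₂²γ²/(2c̄₃(c₁x² + 1)). -/

import Mathlib

/-- the core pointwise estimate in the proof of inequality (14c) of Lemma 1:
`(−c̄₃x² + c̄₂xγ)/(W + 1) ≤ −c̄₃x²/(2(c̄₁x² + 1)) + c̄₂²γ²/(2c̄₃(c₁x² + 1))`. -/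
theorem V2_decay_core (c₁ c₁' c₂' c₃' : ℝ)
    (hc₁ : 0 < c₁) (hc₁' : 0 < c₁') (hc₂' : 0 < c₂') (hc₃' : 0 < c₃')
    (hle : c₁ ≤ c₁') :
    ∀ (x γ W : ℝ), 0 ≤ x → 0 ≤ γ → c₁ * x ^ 2 ≤ W → W ≤ c₁' * x ^ 2 →
      (-(c₃' * x ^ 2) + c₂' * x * γ) / (W + 1) ≤
        -(c₃' * x ^ 2) / (2 * (c₁' * x ^ 2 + 1))
          + c₂' ^ 2 * γ ^ 2 / (2 * c₃' * (c₁ * x ^ 2 + 1)) := by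
  intro x γ W hx hγ hWl hWu
  have hx2 : (0:ℝ) ≤ x ^ 2 := sq_nonneg x
  have hW1 : (0:ℝ) < W + 1 := by nlinarith
  have hd1 : (0:ℝ) < 2 * (c₁' * x ^ 2 + 1) := by nlinarith
  have hd2 : (0:ℝ) < 2 * c₃' * (c₁ * x ^ 2 + 1) := by positivity
  have young : c₂' * x * γ ≤ c₃' * x ^ 2 / 2 + c₂' ^ 2 * γ ^ 2 / (2 * c₃') := by
    rw [div_add_div _ _ (by norm_num : (2:ℝ) ≠ 0) (by positivity : (2*c₃') ≠ 0),
        le_div_iff₀ (by positivity)]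
    nlinarith [sq_nonneg (c₃' * x - c₂' * γ)]
  have step1 : (-(c₃' * x ^ 2) + c₂' * x * γ) / (W + 1) ≤
      (-(c₃' * x ^ 2) / 2) / (W + 1) + (c₂' ^ 2 * γ ^ 2 / (2 * c₃')) / (W + 1) := by
    rw [← add_div]
    gcongr ?_ / (W + 1)
    linarith
  have t1 : (-(c₃' * x ^ 2) / 2) / (W + 1) ≤ -(c₃' * x ^ 2) / (2 * (c₁' * x ^ 2 + 1)) := by
    rw [div_le_div_iff₀ hW1 hd1]
    nlinarith [mul_le_mul_of_nonneg_left hWu (mul_nonneg hc₃'.le hx2)]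
  have t2 : (c₂' ^ 2 * γ ^ 2 / (2 * c₃')) / (W + 1) ≤
      c₂' ^ 2 * γ ^ 2 / (2 * c₃' * (c₁ * x ^ 2 + 1)) := by
    rw [div_div, div_le_div_iff₀ (by positivity) hd2]
    nlinarith [sq_nonneg (c₂' * γ), mul_nonneg (sq_nonneg (c₂' * γ)) hx2,
      mul_le_mul_of_nonneg_left hWl (mul_nonneg (by positivity : (0:ℝ) ≤ 2*c₃') (sq_nonneg (c₂'*γ)))]
  linarith
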